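/- Let V be a finite dimensional vector space with non-degenerate bilinear or Hermitian form, W a subspace with radical R = W ∩ W^⊥, and W' a complement of R in W. Then there exists a subspace W'' of V with dim W'' = dim R such that V = (W'' ⊕ W^⊥) ⊕ W' is an orthogonal direct sum decomposition; in particular W' and U := W'' ⊕ W^⊥ are non-degenerate subspaces. -/

import Mathlib

/-- Let `V` be finite dimensional with a non-degenerate reflexive bilinear form `B`,
`W` a subspace with radical `R = W ⊓ W^⊥`, and `W'` a complement of `R` in `W`. Then there
is a subspace `W''` with `dim W'' = dim R` such that `V` is the orthogonal direct sum of
`U := W'' ⊕ W^⊥` and `W'`; in particular `W'` and `U` are non-degenerate. -/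
theorem orthogonal_complement_of_radical {K V : Type*} [Field K] [AddCommGroup V]
    [Module K V] [FiniteDimensional K V]
    (B : LinearMap.BilinForm K V) (hB : B.Nondegenerate) (hrefl : B.IsRefl)
    (W W' : Submodule K V) (hW'W : W' ≤ W)
    (hinf : (W ⊓ B.orthogonal W) ⊓ W' = ⊥)
    (hsup : (W ⊓ B.orthogonal W) ⊔ W' = W) :
    ∃ W'' : Submodule K V,
      Module.finrank K W'' = Module.finrank K ↥(W ⊓ B.orthogonal W) ∧
      W'' ⊓ B.orthogonal W = ⊥ ∧
      IsCompl (W'' ⊔ B.orthogonal W) W' ∧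
      (∀ u ∈ W'' ⊔ B.orthogonal W, ∀ w ∈ W', B u w = 0) ∧
      (B.restrict W').Nondegenerate ∧
      (B.restrict (W'' ⊔ B.orthogonal W)).Nondegenerate := by
  classical
  -- W' is nondegenerate
  have hW'nd : (B.restrict W').Nondegenerate := by
    suffices hsl : LinearMap.SeparatingLeft (B.restrict W') from
      ⟨hsl, fun y hy => hsl y (fun x => hrefl (x : V) (y : V) (hy x))⟩
    rintro ⟨x, hx⟩ h
    have hxW : x ∈ W := hW'W hx
    have hxorth : x ∈ B.orthogonal W := by
      intro n hn
      rw [← hsup] at hn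
      obtain ⟨r, hr, w, hw, rfl⟩ := Submodule.mem_sup.1 hn
      have h1 : B x r = 0 := hr.2 x hxW
      have h2 : B x w = 0 := h ⟨w, hw⟩
      have h1' : B r x = 0 := hrefl _ _ h1
      have h2' : B w x = 0 := hrefl _ _ h2
      show B (r + w) x = 0
      rw [map_add, LinearMap.add_apply, h1', h2', add_zero]
    have : x ∈ (W ⊓ B.orthogonal W) ⊓ W' := ⟨⟨hxW, hxorth⟩, hx⟩
    rw [hinf] at this
    simpa using this
  have hcompl : IsCompl W' (B.orthogonal W') :=
    B.isCompl_orthogonal_of_restrict_nondegenerate hrefl hW'nd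
  set U : Submodule K V := B.orthogonal W' with hU
  have hWU : B.orthogonal W ≤ U := B.orthogonal_le hW'W
  -- complement of W^⊥ inside U
  set X : Submodule K U := (B.orthogonal W).comap U.subtype with hX
  obtain ⟨C, hC⟩ := X.exists_isCompl
  refine ⟨C.map U.subtype, ?_, ?_, ?_, ?_, hW'nd, ?_⟩
  · -- finrank
    have hmapX : X.map U.subtype = B.orthogonal W := by
      rw [hX, Submodule.map_comap_subtype, inf_eq_right.2 hWU]
    have h1 : Module.finrank K X + Module.finrank K C = Module.finrank K U := by
      rw [← Submodule.finrank_sup_add_finrank_inf_eq, hC.sup_eq_top, hC.inf_eq_bot]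
      simp
    have h2 : Module.finrank K (C.map U.subtype) = Module.finrank K C :=
      Submodule.finrank_map_subtype_eq U C
    have h3 : Module.finrank K (X.map U.subtype) = Module.finrank K X :=
      Submodule.finrank_map_subtype_eq U X
    rw [hmapX] at h3
    have h4 : Module.finrank K U = Module.finrank K V - Module.finrank K W' :=
      LinearMap.BilinForm.finrank_orthogonal hB W'
    have h5 : Module.finrank K (B.orthogonal W) =
        Module.finrank K V - Module.finrank K W :=
      LinearMap.BilinForm.finrank_orthogonal hB W
    have h6 : Module.finrank K ↥(W ⊓ B.orthogonal W) + Module.finrank K W' =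
        Module.finrank K W := by
      have := Submodule.finrank_sup_add_finrank_inf_eq (W ⊓ B.orthogonal W) W'
      rw [hsup, hinf] at this
      simp only [finrank_bot, add_zero] at this
      omega
    have h7 : Module.finrank K W ≤ Module.finrank K V := Submodule.finrank_le W
    have h8 : Module.finrank K W' ≤ Module.finrank K W :=
      Submodule.finrank_mono hW'W
    omega
  · -- W'' ⊓ W^⊥ = ⊥
    have hmapX : X.map U.subtype = B.orthogonal W := by
      rw [hX, Submodule.map_comap_subtype, inf_eq_right.2 hWU]
    rw [← hmapX, ← Submodule.map_inf _ U.injective_subtype, hC.symm.inf_eq_bot,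
      Submodule.map_bot]
  · -- IsCompl
    have hsupU : C.map U.subtype ⊔ B.orthogonal W = U := by
      have hmapX : X.map U.subtype = B.orthogonal W := by
        rw [hX, Submodule.map_comap_subtype, inf_eq_right.2 hWU]
      rw [← hmapX, ← Submodule.map_sup, hC.symm.sup_eq_top, Submodule.map_top,
        Submodule.range_subtype]
    rw [hsupU]
    exact hcompl.symm
  · -- orthogonality
    have hsupU : C.map U.subtype ⊔ B.orthogonal W ≤ U :=
      sup_le (Submodule.map_subtype_le U C) hWU
    intro u hu w hw
    exact hrefl _ _ (hsupU hu w hw)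
  · -- U nondegenerate
    have hsupU : C.map U.subtype ⊔ B.orthogonal W = U := by
      have hmapX : X.map U.subtype = B.orthogonal W := by
        rw [hX, Submodule.map_comap_subtype, inf_eq_right.2 hWU]
      rw [← hmapX, ← Submodule.map_sup, hC.symm.sup_eq_top, Submodule.map_top,
        Submodule.range_subtype]
    rw [hsupU, hU,
      LinearMap.BilinForm.restrict_nondegenerate_iff_isCompl_orthogonal hrefl,
      LinearMap.BilinForm.orthogonal_orthogonal hB hrefl]
    exact hcompl.symm
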